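/- arXiv:1710.05304 — 2 statements merged into one kernel-verified Lean document; each statement's English description precedes it below -/
import Mathlib

section
/- Let H be a Hilbert space and H₁, H₂ closed subspaces with orthogonal projections P₁, P₂, and let P denote the orthogonal projection onto H₁ ∩ H₂. Then the operator norms ‖P₂P₁ − P‖ and ‖P₁P₂ − P‖ are equal, and both equal the infimum of all κ ≥ 0 such that |⟨x₁, x₂⟩| ≤ κ‖x₁‖‖x₂‖ for all x₁ ∈ H₁ ∩ (H₁ ∩ H₂)^⊥ and x₂ ∈ H₂ ∩ (H₁ ∩ H₂)^⊥. -/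
open scoped InnerProductSpace

section aux
variable {H : Type*} [NormedAddCommGroup H] [InnerProductSpace ℂ H]

/-- Abstract "orthogonal projection data". -/
def IsOP (K : Submodule ℂ H) (Q : H →L[ℂ] H) : Prop :=
  ∀ x : H, Q x ∈ K ∧ ∀ y ∈ K, ⟪x - Q x, y⟫_ℂ = 0

lemma IsOP.mem {K : Submodule ℂ H} {Q : H →L[ℂ] H} (h : IsOP K Q) (x : H) : Q x ∈ K :=
  (h x).1

lemma IsOP.fix {K : Submodule ℂ H} {Q : H →L[ℂ] H} (h : IsOP K Q) {x : H} (hx : x ∈ K) :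
    Q x = x := by
  have h0 : ⟪x - Q x, x - Q x⟫_ℂ = 0 := (h x).2 _ (K.sub_mem hx (h.mem x))
  have := inner_self_eq_zero.mp h0
  rw [sub_eq_zero] at this
  exact this.symm

lemma IsOP.inner_right {K : Submodule ℂ H} {Q : H →L[ℂ] H} (h : IsOP K Q) (x y : H) :
    ⟪x, Q y⟫_ℂ = ⟪Q x, Q y⟫_ℂ := by
  have h0 : ⟪x - Q x, Q y⟫_ℂ = 0 := (h x).2 _ (h.mem y)
  rw [inner_sub_left, sub_eq_zero] at h0
  exact h0

lemma IsOP.symm {K : Submodule ℂ H} {Q : H →L[ℂ] H} (h : IsOP K Q) (x y : H) :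
    ⟪Q x, y⟫_ℂ = ⟪x, Q y⟫_ℂ := by
  have h1 := h.inner_right y x
  have h2 := h.inner_right x y
  calc ⟪Q x, y⟫_ℂ = (starRingEnd ℂ) ⟪y, Q x⟫_ℂ := (inner_conj_symm _ _).symm
    _ = (starRingEnd ℂ) ⟪Q y, Q x⟫_ℂ := by rw [h1]
    _ = ⟪Q x, Q y⟫_ℂ := inner_conj_symm _ _
    _ = ⟪x, Q y⟫_ℂ := h2.symm

lemma IsOP.norm_le {K : Submodule ℂ H} {Q : H →L[ℂ] H} (h : IsOP K Q) (x : H) :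
    ‖Q x‖ ≤ ‖x‖ := by
  have h1 : ‖Q x‖ ^ 2 = ‖⟪x, Q x⟫_ℂ‖ := by
    rw [h.inner_right x x, inner_self_eq_norm_sq_to_K]
    simp [sq_abs]
  nlinarith [norm_inner_le_norm (𝕜 := ℂ) x (Q x), norm_nonneg (Q x), norm_nonneg x,
    norm_nonneg (⟪x, Q x⟫_ℂ)]

end aux

/-- For closed subspaces `H₁, H₂` of a complex Hilbert space `H` with orthogonal
projections `P₁, P₂`, and `P` the orthogonal projection onto `H₁ ∩ H₂`,
the operator norms `‖P₂P₁ − P‖` and `‖P₁P₂ − P‖` coincide and both are equal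
to `θ(H₁,H₂) = inf{κ ≥ 0 : |⟪x₁,x₂⟫| ≤ κ‖x₁‖‖x₂‖ for all
x₁ ∈ H₁ ∩ (H₁∩H₂)ᗮ, x₂ ∈ H₂ ∩ (H₁∩H₂)ᗮ}`. -/
theorem stmt3 (H : Type*) [NormedAddCommGroup H] [InnerProductSpace ℂ H]
    [CompleteSpace H]
    (H₁ H₂ : Submodule ℂ H) (hc₁ : IsClosed (H₁ : Set H)) (hc₂ : IsClosed (H₂ : Set H))
    (P₁ P₂ P : H →L[ℂ] H)
    (hP₁ : ∀ x : H, P₁ x ∈ H₁ ∧ ∀ y ∈ H₁, ⟪x - P₁ x, y⟫_ℂ = 0)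
    (hP₂ : ∀ x : H, P₂ x ∈ H₂ ∧ ∀ y ∈ H₂, ⟪x - P₂ x, y⟫_ℂ = 0)
    (hP : ∀ x : H, P x ∈ H₁ ⊓ H₂ ∧ ∀ y ∈ H₁ ⊓ H₂, ⟪x - P x, y⟫_ℂ = 0) :
    ‖P₂.comp P₁ - P‖ = ‖P₁.comp P₂ - P‖ ∧
    ‖P₂.comp P₁ - P‖ =
      sInf {κ : ℝ | 0 ≤ κ ∧
        ∀ x₁ ∈ H₁ ⊓ (H₁ ⊓ H₂)ᗮ, ∀ x₂ ∈ H₂ ⊓ (H₁ ⊓ H₂)ᗮ,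
          ‖⟪x₁, x₂⟫_ℂ‖ ≤ κ * (‖x₁‖ * ‖x₂‖)} := by
  have h1 : IsOP H₁ P₁ := hP₁
  have h2 : IsOP H₂ P₂ := hP₂
  have h0 : IsOP (H₁ ⊓ H₂) P := hP
  set M := H₁ ⊓ H₂ with hM
  -- basic commutation facts
  have hP1P : ∀ x, P₁ (P x) = P x := fun x => h1.fix (h0.mem x).1
  have hP2P : ∀ x, P₂ (P x) = P x := fun x => h2.fix (h0.mem x).2
  have hPP : ∀ x, P (P x) = P x := fun x => h0.fix (h0.mem x)
  have hPP1 : ∀ x, P (P₁ x) = P x := by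
    intro x
    apply ext_inner_right ℂ
    intro y
    rw [h0.symm, h1.symm, hP1P]
    exact (h0.symm x y).symm
  have hPP2 : ∀ x, P (P₂ x) = P x := by
    intro x
    apply ext_inner_right ℂ
    intro y
    rw [h0.symm, h2.symm, hP2P]
    exact (h0.symm x y).symm
  -- Q₁, Q₂ are orthogonal projections onto K₁, K₂
  set K₁ := H₁ ⊓ Mᗮ with hK₁
  set K₂ := H₂ ⊓ Mᗮ with hK₂
  have hQgen : ∀ (H' : Submodule ℂ H) (P' : H →L[ℂ] H), IsOP H' P' → M ≤ H' →
      (∀ x, P' (P x) = P x) → (∀ x, P (P' x) = P x) → IsOP (H' ⊓ Mᗮ) (P' - P) := by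
    intro H' P' h' hle hP'P hPP'
    intro x
    constructor
    · refine Submodule.mem_inf.mpr ⟨?_, Submodule.mem_orthogonal _ _ |>.mpr ?_⟩
      · have : (P' - P) x = P' x - P x := rfl
        rw [this]
        exact H'.sub_mem (h'.mem x) (hle (h0.mem x))
      · intro u hu
        have hu' : P u = u := h0.fix hu
        have e1 : ⟪P' x - P x, u⟫_ℂ = 0 := by
          rw [inner_sub_left, h'.symm, h0.symm, hu', h'.fix (hle hu), sub_self]
        have : (P' - P) x = P' x - P x := rfl
        rw [this, ← inner_conj_symm, e1, map_zero]
    · intro y hy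
      have e1 : ⟪x - P' x, y⟫_ℂ = 0 := (h' x).2 y hy.1
      have e2 : ⟪P x, y⟫_ℂ = 0 :=
        Submodule.inner_right_of_mem_orthogonal (h0.mem x) hy.2
      have : x - (P' - P) x = (x - P' x) + P x := by
        simp [ContinuousLinearMap.sub_apply]; abel
      rw [this, inner_add_left, e1, e2, add_zero]
  have hQ1 : IsOP K₁ (P₁ - P) := hQgen H₁ P₁ h1 inf_le_left hP1P hPP1
  have hQ2 : IsOP K₂ (P₂ - P) := hQgen H₂ P₂ h2 inf_le_right hP2P hPP2
  -- the operator identity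
  have hkey : P₂.comp P₁ - P = (P₂ - P).comp (P₁ - P) := by
    ext x
    simp only [ContinuousLinearMap.sub_apply, ContinuousLinearMap.comp_apply,
      map_sub]
    rw [hP2P, hPP1, hPP]
    abel
  set Q₁ := P₁ - P
  set Q₂ := P₂ - P
  set A := Q₂.comp Q₁ with hA
  set S := {κ : ℝ | 0 ≤ κ ∧
        ∀ x₁ ∈ H₁ ⊓ (H₁ ⊓ H₂)ᗮ, ∀ x₂ ∈ H₂ ⊓ (H₁ ⊓ H₂)ᗮ,
          ‖⟪x₁, x₂⟫_ℂ‖ ≤ κ * (‖x₁‖ * ‖x₂‖)} with hS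
  -- Part 1 via adjoints
  have sa : ∀ (H' : Submodule ℂ H) (P' : H →L[ℂ] H), IsOP H' P' →
      ContinuousLinearMap.adjoint P' = P' := by
    intro H' P' h'
    exact ((ContinuousLinearMap.eq_adjoint_iff P' P').mpr (h'.symm)).symm
  have hadj : ContinuousLinearMap.adjoint (P₂.comp P₁ - P) = P₁.comp P₂ - P := by
    rw [map_sub, ContinuousLinearMap.adjoint_comp, sa H₁ P₁ h1, sa H₂ P₂ h2, sa M P h0]
  have part1 : ‖P₂.comp P₁ - P‖ = ‖P₁.comp P₂ - P‖ := by
    rw [← hadj, LinearIsometryEquiv.norm_map]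
  refine ⟨part1, ?_⟩
  rw [hkey]
  -- membership
  have hmem : ‖A‖ ∈ S := by
    refine ⟨norm_nonneg _, ?_⟩
    intro x₁ hx₁ x₂ hx₂
    have e1 : ⟪x₁, x₂⟫_ℂ = ⟪Q₂ (Q₁ x₁), x₂⟫_ℂ := by
      rw [hQ1.fix hx₁, hQ2.symm, hQ2.fix hx₂]
    rw [e1]
    calc ‖⟪Q₂ (Q₁ x₁), x₂⟫_ℂ‖ ≤ ‖Q₂ (Q₁ x₁)‖ * ‖x₂‖ := norm_inner_le_norm _ _
      _ ≤ (‖A‖ * ‖x₁‖) * ‖x₂‖ := by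
          have := A.le_opNorm x₁
          exact mul_le_mul_of_nonneg_right this (norm_nonneg _)
      _ = ‖A‖ * (‖x₁‖ * ‖x₂‖) := by ring
  -- lower bound
  have hlb : ∀ κ ∈ S, ‖A‖ ≤ κ := by
    intro κ hκ
    refine A.opNorm_le_bound hκ.1 ?_
    intro x
    set t := ‖Q₂ (Q₁ x)‖ with ht
    have hbound : t ^ 2 ≤ κ * (‖x‖ * t) := by
      have e1 : ⟪Q₁ x, Q₂ (Q₁ x)⟫_ℂ = ⟪Q₂ (Q₁ x), Q₂ (Q₁ x)⟫_ℂ := hQ2.inner_right _ _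
      have e2 : ‖⟪Q₁ x, Q₂ (Q₁ x)⟫_ℂ‖ = t ^ 2 := by
        rw [e1, inner_self_eq_norm_sq_to_K]
        simp [sq_abs, ht]
      have e3 : ‖⟪Q₁ x, Q₂ (Q₁ x)⟫_ℂ‖ ≤ κ * (‖Q₁ x‖ * t) :=
        hκ.2 _ (hQ1.mem x) _ (hQ2.mem (Q₁ x))
      have e4 : ‖Q₁ x‖ ≤ ‖x‖ := hQ1.norm_le x
      have e5 : κ * (‖Q₁ x‖ * t) ≤ κ * (‖x‖ * t) := by
        refine mul_le_mul_of_nonneg_left ?_ hκ.1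
        exact mul_le_mul_of_nonneg_right e4 (by rw [ht]; exact norm_nonneg _)
      linarith
    have hAx : ‖A x‖ = t := rfl
    rw [hAx]
    rcases eq_or_lt_of_le (norm_nonneg (Q₂ (Q₁ x))) with h | h
    · have h' : t = 0 := by rw [ht, ← h]
      rw [h']
      exact mul_nonneg hκ.1 (norm_nonneg x)
    · have h' : 0 < t := by rw [ht]; exact h
      nlinarith
  exact le_antisymm (le_csInf ⟨‖A‖, hmem⟩ hlb) (csInf_le ⟨0, fun κ hκ => hκ.1⟩ hmem)
end

section
/- Let G be a finite group with subgroups K₀, K₁ generating G, let ρ be the right regular representation of G on ℓ²(G), and define k₀ = (1/|K₀|)∑_{g∈K₀} g, k₁ = (1/|K₁|)∑_{g∈K₁} g, k_G = (1/|G|)∑_{g∈G} g in ℂ[G]. Then ‖ρ(k₁k₀ − k_G)‖ = ‖ρ(k₁) restricted to ℓ²₀(G)_{K₀}‖, where ℓ²₀(G)_{K₀} is the space of functions φ : G → ℂ that are constant on left cosets of K₀ and satisfy ∑_{g∈G} φ(g) = 0. -/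
open Finset

set_option linter.unusedSectionVars false in
set_option linter.unusedVariables false in
private lemma stmt8_n2_eq {G : Type*} [Group G] [Fintype G] (n2 : (G → ℂ) → ℝ)
    (hn2 : ∀ φ : G → ℂ, n2 φ = Real.sqrt (∑ g : G, ‖φ g‖ ^ 2)) (φ : G → ℂ) :
    n2 φ = ‖(WithLp.linearEquiv 2 ℂ (G → ℂ)).symm φ‖ := by
  rw [hn2, EuclideanSpace.norm_eq]
  rfl

set_option linter.unusedVariables false in
private lemma stmt8_translate {G : Type*} [Group G] [Fintype G] (n2 : (G → ℂ) → ℝ)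
    (hn2 : ∀ φ : G → ℂ, n2 φ = Real.sqrt (∑ g : G, ‖φ g‖ ^ 2)) (φ : G → ℂ) (a : G) :
    n2 (fun x => φ (x * a)) = n2 φ := by
  rw [hn2, hn2]
  congr 1
  exact Fintype.sum_equiv (Equiv.mulRight a) _ _ fun g => rfl

private lemma stmt8_sum_mul {G : Type*} [Group G] [Fintype G] (φ : G → ℂ) (x : G) :
    ∑ g : G, φ (x * g) = ∑ g : G, φ g :=
  Fintype.sum_equiv (Equiv.mulLeft x) _ _ fun g => rfl

private lemma stmt8_smul {G : Type*} [Group G] [Fintype G] (n2 : (G → ℂ) → ℝ)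
    (hn2 : ∀ φ : G → ℂ, n2 φ = Real.sqrt (∑ g : G, ‖φ g‖ ^ 2)) (z : ℂ) (φ : G → ℂ) :
    n2 (z • φ) = ‖z‖ * n2 φ := by
  rw [stmt8_n2_eq n2 hn2, stmt8_n2_eq n2 hn2, map_smul, norm_smul]

private lemma stmt8_zero_iff {G : Type*} [Group G] [Fintype G] (n2 : (G → ℂ) → ℝ)
    (hn2 : ∀ φ : G → ℂ, n2 φ = Real.sqrt (∑ g : G, ‖φ g‖ ^ 2)) (φ : G → ℂ) :
    n2 φ = 0 ↔ φ = 0 := by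
  rw [stmt8_n2_eq n2 hn2, norm_eq_zero, EmbeddingLike.map_eq_zero_iff]

private lemma stmt8_avg_le {G : Type*} [Group G] [Fintype G] (n2 : (G → ℂ) → ℝ)
    (hn2 : ∀ φ : G → ℂ, n2 φ = Real.sqrt (∑ g : G, ‖φ g‖ ^ 2))
    (K : Subgroup G) [Fintype K] (φ : G → ℂ) :
    n2 (fun x => (Fintype.card K : ℂ)⁻¹ * ∑ a : K, φ (x * a)) ≤ n2 φ := by
  have hfun : (fun x => (Fintype.card K : ℂ)⁻¹ * ∑ a : K, φ (x * a))
      = (Fintype.card K : ℂ)⁻¹ • ∑ a : K, (fun x => φ (x * (a : G))) := by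
    funext x
    simp [Finset.sum_apply, mul_comm]
  rw [stmt8_n2_eq n2 hn2, hfun, map_smul, map_sum, norm_smul]
  calc ‖((Fintype.card K : ℂ))⁻¹‖ *
        ‖∑ a : K, (WithLp.linearEquiv 2 ℂ (G → ℂ)).symm (fun x => φ (x * (a : G)))‖
      ≤ ‖((Fintype.card K : ℂ))⁻¹‖ *
        ∑ a : K, ‖(WithLp.linearEquiv 2 ℂ (G → ℂ)).symm (fun x => φ (x * (a : G)))‖ := by
        gcongr
        exact norm_sum_le _ _
    _ = (Fintype.card K : ℝ)⁻¹ * ∑ _a : K, n2 φ := by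
        congr 1
        · simp
        · refine Finset.sum_congr rfl fun a _ => ?_
          rw [← stmt8_n2_eq n2 hn2, stmt8_translate n2 hn2]
    _ = n2 φ := by
        rw [Finset.sum_const, Finset.card_univ, nsmul_eq_mul, ← mul_assoc,
          inv_mul_cancel₀ (by exact_mod_cast Fintype.card_ne_zero), one_mul]

private lemma stmt8_sub_mean_le {G : Type*} [Group G] [Fintype G] (n2 : (G → ℂ) → ℝ)
    (hn2 : ∀ φ : G → ℂ, n2 φ = Real.sqrt (∑ g : G, ‖φ g‖ ^ 2)) (φ : G → ℂ) :
    n2 (φ - fun _ => (Fintype.card G : ℂ)⁻¹ * ∑ g : G, φ g) ≤ n2 φ := by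
  set m : ℂ := (Fintype.card G : ℂ)⁻¹ * ∑ g : G, φ g with hm
  set e := (WithLp.linearEquiv 2 ℂ (G → ℂ)).symm with he
  have hcG : (Fintype.card G : ℂ) ≠ 0 := by exact_mod_cast Fintype.card_ne_zero
  have horth : (inner ℂ (e fun _ => m) (e (φ - fun _ => m)) : ℂ) = 0 := by
    have h0 : ∀ g : G, (e (φ - fun _ => m)) g = φ g - m := fun g => rfl
    simp only [PiLp.inner_apply, RCLike.inner_apply, h0]
    have h1 : ∀ g : G, (e fun _ : G => m) g = m := fun g => rfl
    simp only [h1]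
    rw [← Finset.sum_mul, Finset.sum_sub_distrib, Finset.sum_const, Finset.card_univ,
      nsmul_eq_mul, hm]
    field_simp
    ring
  have hsq : ‖e (φ - fun _ => m)‖ ^ 2 ≤ ‖e φ‖ ^ 2 := by
    have hφ : e φ = e (fun _ => m) + e (φ - fun _ => m) := by
      rw [← map_add]; congr 1; funext g; simp
    rw [hφ, @norm_add_sq ℂ, horth]
    simp [sq_nonneg]
  rw [stmt8_n2_eq n2 hn2, stmt8_n2_eq n2 hn2]
  calc ‖e (φ - fun _ => m)‖ = Real.sqrt (‖e (φ - fun _ => m)‖ ^ 2) := by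
        rw [Real.sqrt_sq (norm_nonneg _)]
    _ ≤ Real.sqrt (‖e φ‖ ^ 2) := Real.sqrt_le_sqrt hsq
    _ = ‖e φ‖ := Real.sqrt_sq (norm_nonneg _)

/-- For a finite group `G` generated by subgroups `K₀, K₁`, with `ρ` the right
regular representation on `ℓ²(G)` and averaging elements `k₀, k₁, k_G`, the
operator norm of `ρ(k₁k₀ − k_G)` equals the operator norm of `ρ(k₁)` restricted
to `ℓ²₀(G)_{K₀}`, the space of functions constant on left cosets of `K₀` with
total sum zero. -/
theorem stmt8 (G : Type*) [Group G] [Fintype G] (K₀ K₁ : Subgroup G)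
    [Fintype K₀] [Fintype K₁]
    (hgen : K₀ ⊔ K₁ = ⊤)
    -- the ℓ² norm on functions on G
    (n2 : (G → ℂ) → ℝ)
    (hn2 : ∀ φ : G → ℂ, n2 φ = Real.sqrt (∑ g : G, ‖φ g‖ ^ 2))
    -- ρ(k₁ k₀ − k_G)
    (opA : (G → ℂ) → (G → ℂ))
    (hopA : ∀ (φ : G → ℂ) (x : G), opA φ x =
      ((Fintype.card K₁ : ℂ) * (Fintype.card K₀ : ℂ))⁻¹ *
          (∑ a : K₁, ∑ b : K₀, φ (x * a * b)) -
        (Fintype.card G : ℂ)⁻¹ * ∑ g : G, φ (x * g))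
    -- ρ(k₁)
    (opB : (G → ℂ) → (G → ℂ))
    (hopB : ∀ (φ : G → ℂ) (x : G), opB φ x =
      (Fintype.card K₁ : ℂ)⁻¹ * ∑ a : K₁, φ (x * a)) :
    sSup {r : ℝ | ∃ φ : G → ℂ, n2 φ = 1 ∧ r = n2 (opA φ)} =
      sSup {r : ℝ | ∃ φ : G → ℂ,
        (∀ g₁ g₂ : G, (g₁ : G ⧸ K₀) = (g₂ : G ⧸ K₀) → φ g₁ = φ g₂) ∧
        (∑ g : G, φ g = 0) ∧ n2 φ = 1 ∧ r = n2 (opB φ)} := by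
  classical
  have hcK0 : (Fintype.card K₀ : ℂ) ≠ 0 := by exact_mod_cast Fintype.card_ne_zero
  have hcK1 : (Fintype.card K₁ : ℂ) ≠ 0 := by exact_mod_cast Fintype.card_ne_zero
  have hcG : (Fintype.card G : ℂ) ≠ 0 := by exact_mod_cast Fintype.card_ne_zero
  have n2nonneg : ∀ φ : G → ℂ, 0 ≤ n2 φ := fun φ => by
    rw [hn2]; exact Real.sqrt_nonneg _
  set P : (G → ℂ) → (G → ℂ) := fun φ x =>
    (Fintype.card K₀ : ℂ)⁻¹ * ∑ b : K₀, φ (x * b) -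
      (Fintype.card G : ℂ)⁻¹ * ∑ g : G, φ g with hPdef
  -- P φ is constant on left cosets of K₀
  have hP1 : ∀ (φ : G → ℂ) (g₁ g₂ : G), (g₁ : G ⧸ K₀) = (g₂ : G ⧸ K₀) →
      P φ g₁ = P φ g₂ := by
    intro φ g₁ g₂ h
    have hk : g₁⁻¹ * g₂ ∈ K₀ := QuotientGroup.eq.mp h
    have hsum : ∑ b : K₀, φ (g₂ * b) = ∑ b : K₀, φ (g₁ * b) := by
      have h2 : g₂ = g₁ * (⟨g₁⁻¹ * g₂, hk⟩ : K₀) := by simp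
      rw [h2]
      refine Fintype.sum_equiv (Equiv.mulLeft (⟨g₁⁻¹ * g₂, hk⟩ : K₀)) _ _ fun b => ?_
      simp [mul_assoc]
    simp only [hPdef, hsum]
  -- P φ has total sum zero
  have hP2 : ∀ φ : G → ℂ, ∑ g : G, P φ g = 0 := by
    intro φ
    have hswap : ∑ x : G, ∑ b : K₀, φ (x * b) = (Fintype.card K₀ : ℂ) * ∑ g : G, φ g := by
      rw [Finset.sum_comm]
      have h0 : ∀ b : K₀, ∑ x : G, φ (x * b) = ∑ g : G, φ g := fun b =>
        Fintype.sum_equiv (Equiv.mulRight (b : G)) _ _ fun g => rfl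
      simp [h0, Finset.sum_const, Finset.card_univ, mul_comm]
    simp only [hPdef]
    rw [Finset.sum_sub_distrib, ← Finset.mul_sum, hswap, Finset.sum_const, Finset.card_univ,
      nsmul_eq_mul]
    field_simp
    ring
  -- opA φ = opB (P φ)
  have hPA : ∀ φ : G → ℂ, opA φ = opB (P φ) := by
    intro φ
    funext x
    rw [hopA, hopB]
    simp only [hPdef]
    have hs : ∑ g : G, φ (x * g) = ∑ g : G, φ g := stmt8_sum_mul φ x
    rw [hs, Finset.sum_sub_distrib, ← Finset.mul_sum, Finset.sum_const, Finset.card_univ,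
      nsmul_eq_mul, mul_inv, mul_sub, ← mul_assoc, ← mul_assoc]
    rw [inv_mul_cancel₀ hcK1, one_mul,
      mul_comm ((Fintype.card K₁ : ℂ))⁻¹ ((Fintype.card K₀ : ℂ))⁻¹]
  -- n2 (P φ) ≤ n2 φ
  have hPle : ∀ φ : G → ℂ, n2 (P φ) ≤ n2 φ := by
    intro φ
    set ψ : G → ℂ := φ - fun _ => (Fintype.card G : ℂ)⁻¹ * ∑ g : G, φ g with hψdef
    have h1 : P φ = fun x => (Fintype.card K₀ : ℂ)⁻¹ * ∑ b : K₀, ψ (x * b) := by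
      funext x
      simp only [hPdef, hψdef, Pi.sub_apply]
      rw [Finset.sum_sub_distrib, Finset.sum_const, Finset.card_univ, nsmul_eq_mul, mul_sub]
      congr 1
      rw [← mul_assoc, inv_mul_cancel₀ hcK0, one_mul]
    rw [h1]
    exact le_trans (stmt8_avg_le n2 hn2 K₀ ψ) (hψdef ▸ stmt8_sub_mean_le n2 hn2 φ)
  -- n2 (opB φ) ≤ n2 φ
  have hBle : ∀ φ : G → ℂ, n2 (opB φ) ≤ n2 φ := by
    intro φ
    have h0 : opB φ = fun x => (Fintype.card K₁ : ℂ)⁻¹ * ∑ a : K₁, φ (x * a) :=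
      funext (hopB φ)
    rw [h0]
    exact stmt8_avg_le n2 hn2 K₁ φ
  -- opB is ℂ-homogeneous
  have hBsmul : ∀ (z : ℂ) (φ : G → ℂ), opB (z • φ) = z • opB φ := by
    intro z φ
    funext x
    rw [Pi.smul_apply, smul_eq_mul, hopB, hopB]
    simp only [Pi.smul_apply, smul_eq_mul]
    rw [← Finset.mul_sum]
    ring
  set S₁ := {r : ℝ | ∃ φ : G → ℂ, n2 φ = 1 ∧ r = n2 (opA φ)} with hS₁
  set S₂ := {r : ℝ | ∃ φ : G → ℂ,
      (∀ g₁ g₂ : G, (g₁ : G ⧸ K₀) = (g₂ : G ⧸ K₀) → φ g₁ = φ g₂) ∧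
      (∑ g : G, φ g = 0) ∧ n2 φ = 1 ∧ r = n2 (opB φ)} with hS₂
  have memS₁_nonneg : ∀ r ∈ S₁, 0 ≤ r := by
    rintro r ⟨φ, -, rfl⟩; exact n2nonneg _
  have memS₂_nonneg : ∀ r ∈ S₂, 0 ≤ r := by
    rintro r ⟨φ, -, -, -, rfl⟩; exact n2nonneg _
  have bdd₁ : BddAbove S₁ := by
    refine ⟨1, ?_⟩
    rintro r ⟨φ, hφ, rfl⟩
    calc n2 (opA φ) = n2 (opB (P φ)) := by rw [hPA]
      _ ≤ n2 (P φ) := hBle _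
      _ ≤ n2 φ := hPle _
      _ = 1 := hφ
  have bdd₂ : BddAbove S₂ := by
    refine ⟨1, ?_⟩
    rintro r ⟨φ, -, -, hφ, rfl⟩
    exact (hBle φ).trans_eq hφ
  have hsub : S₂ ⊆ S₁ := by
    rintro r ⟨φ, hcoset, hsum0, hφ, rfl⟩
    refine ⟨φ, hφ, ?_⟩
    congr 1
    funext x
    rw [hopA, hopB]
    have hs : ∑ g : G, φ (x * g) = ∑ g : G, φ g := stmt8_sum_mul φ x
    have hb : ∀ a : K₁, ∑ b : K₀, φ (x * a * b) = (Fintype.card K₀ : ℂ) * φ (x * a) := by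
      intro a
      have h0 : ∀ b : K₀, φ (x * a * b) = φ (x * a) := fun b =>
        hcoset _ _ (QuotientGroup.mk_mul_of_mem (x * (a : G)) b.2)
      simp [h0, Finset.sum_const, Finset.card_univ, mul_comm]
    simp only [hb, hs, hsum0]
    rw [← Finset.mul_sum, mul_inv, mul_zero, sub_zero]
    field_simp
  have S₁ne : S₁.Nonempty := by
    refine ⟨n2 (opA (fun g => if g = 1 then 1 else 0)),
      fun g => if g = 1 then 1 else 0, ?_, rfl⟩
    rw [hn2]
    have h0 : ∀ g : G, ‖if g = 1 then (1 : ℂ) else 0‖ ^ 2 = if g = 1 then 1 else 0 := by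
      intro g; split <;> simp
    rw [Finset.sum_congr rfl fun g _ => h0 g, Finset.sum_ite_eq' Finset.univ 1 (fun _ => (1 : ℝ))]
    simp
  apply le_antisymm
  · refine csSup_le S₁ne ?_
    rintro r ⟨φ, hφ, rfl⟩
    rcases eq_or_ne (n2 (P φ)) 0 with hc | hc
    · have hz : P φ = 0 := (stmt8_zero_iff n2 hn2 _).mp hc
      have hA0 : opA φ = 0 := by
        rw [hPA, hz]
        funext x
        rw [hopB]
        simp
      rw [hA0, (stmt8_zero_iff n2 hn2 0).mpr rfl]
      exact Real.sSup_nonneg memS₂_nonneg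
    · set c := n2 (P φ) with hcdef
      have hcpos : 0 < c := lt_of_le_of_ne (n2nonneg _) (Ne.symm hc)
      set ψ := ((c : ℂ))⁻¹ • P φ with hψ
      have hnormc : ‖((c : ℝ) : ℂ)⁻¹‖ = c⁻¹ := by
        rw [norm_inv, Complex.norm_real, Real.norm_eq_abs, abs_of_pos hcpos]
      have hψcoset : ∀ g₁ g₂ : G, (g₁ : G ⧸ K₀) = (g₂ : G ⧸ K₀) → ψ g₁ = ψ g₂ := by
        intro g₁ g₂ h
        simp only [hψ, Pi.smul_apply, smul_eq_mul, hP1 φ g₁ g₂ h]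
      have hψsum : ∑ g : G, ψ g = 0 := by
        simp only [hψ, Pi.smul_apply, smul_eq_mul]
        rw [← Finset.mul_sum, hP2, mul_zero]
      have hψn : n2 ψ = 1 := by
        rw [hψ, stmt8_smul n2 hn2, hnormc, ← hcdef, inv_mul_cancel₀ (ne_of_gt hcpos)]
      have key : n2 (opA φ) = c * n2 (opB ψ) := by
        rw [hPA, hψ, hBsmul, stmt8_smul n2 hn2, hnormc, ← mul_assoc,
          mul_inv_cancel₀ (ne_of_gt hcpos), one_mul]
      have hmem : n2 (opB ψ) ∈ S₂ := ⟨ψ, hψcoset, hψsum, hψn, rfl⟩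
      have hcle1 : c ≤ 1 := hφ ▸ hPle φ
      calc n2 (opA φ) = c * n2 (opB ψ) := key
        _ ≤ 1 * n2 (opB ψ) := mul_le_mul_of_nonneg_right hcle1 (n2nonneg _)
        _ = n2 (opB ψ) := one_mul _
        _ ≤ sSup S₂ := le_csSup bdd₂ hmem
  · rcases Set.eq_empty_or_nonempty S₂ with h | h
    · rw [h, Real.sSup_empty]
      exact Real.sSup_nonneg memS₁_nonneg
    · exact csSup_le_csSup bdd₁ h hsub
end
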